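/- The alternating minimization applied to the quadratic function H converges q-linearly: for every k ≥ 0, H^{k+1} − H* ≤ (1 − λ_min(A^{-1/2} S_A A^{-1/2})) (1 − λ_min(C^{-1/2} S_C C^{-1/2})) (H^k − H*), where S_A = A − Bᵀ C^{-1} B and S_C = C − B A^{-1} Bᵀ are the Schur complements and λ_min denotes the smallest eigenvalue of a symmetric positive definite matrix. -/

import Mathlib

open Matrix

/-- The smallest eigenvalue of a symmetric matrix, characterized as the largest constant
`c` such that `vᵀ M v ≥ c ‖v‖²` for all `v`. -/
noncomputable def lambdaMin {k : ℕ} (M : Matrix (Fin k) (Fin k) ℝ) : ℝ :=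
  sSup {c : ℝ | ∀ v : Fin k → ℝ, c * (v ⬝ᵥ v) ≤ v ⬝ᵥ M.mulVec v}

/-- The square root of a positive semidefinite matrix, as `Matrix.PosSemidef.sqrt` was
defined in the older Mathlib. -/
noncomputable def posSemidefSqrt {k : ℕ} {M : Matrix (Fin k) (Fin k) ℝ} (hM : M.PosSemidef) :
    Matrix (Fin k) (Fin k) ℝ :=
  hM.1.eigenvectorUnitary.1 * diagonal ((↑) ∘ (√·) ∘ hM.1.eigenvalues) *
    (star hM.1.eigenvectorUnitary : Matrix (Fin k) (Fin k) ℝ)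

lemma dot_trans {k l : ℕ} (M : Matrix (Fin k) (Fin l) ℝ) (x : Fin l → ℝ) (y : Fin k → ℝ) :
    x ⬝ᵥ Mᵀ *ᵥ y = y ⬝ᵥ M *ᵥ x := by
  rw [mulVec_transpose, dotProduct_comm, ← dotProduct_mulVec]

lemma dot_symm {k : ℕ} {M : Matrix (Fin k) (Fin k) ℝ} (hM : M.IsSymm) (x y : Fin k → ℝ) :
    x ⬝ᵥ M *ᵥ y = y ⬝ᵥ M *ᵥ x := by
  conv_lhs => rw [← hM]
  exact dot_trans M x y

lemma psd_quad {k : ℕ} {M : Matrix (Fin k) (Fin k) ℝ} (h : M.PosSemidef) (v : Fin k → ℝ) :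
    0 ≤ v ⬝ᵥ M *ᵥ v := by simpa using h.dotProduct_mulVec_nonneg v

lemma dot_self_nonneg {k : ℕ} (v : Fin k → ℝ) : 0 ≤ v ⬝ᵥ v :=
  Finset.sum_nonneg fun _ _ => mul_self_nonneg _

lemma grad_zero {k : ℕ} (Q : Matrix (Fin k) (Fin k) ℝ) (g : Fin k → ℝ)
    (h : ∀ v : Fin k → ℝ, 0 ≤ v ⬝ᵥ g + 1 / 2 * (v ⬝ᵥ Q *ᵥ v)) : g = 0 := by
  by_contra hg
  have hs : 0 < g ⬝ᵥ g :=
    lt_of_le_of_ne (dot_self_nonneg g) (fun hh => hg (dotProduct_self_eq_zero.mp hh.symm))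
  set s : ℝ := g ⬝ᵥ g with hsdef
  set qq : ℝ := g ⬝ᵥ Q *ᵥ g with hqdef
  set Mx : ℝ := max qq 1 with hMdef
  have hM1 : (1:ℝ) ≤ Mx := le_max_right _ _
  have hMq : qq ≤ Mx := le_max_left _ _
  have hMpos : (0:ℝ) < Mx := by linarith
  set t : ℝ := s / Mx with htdef
  have ht : 0 < t := div_pos hs hMpos
  have htM : t * Mx = s := div_mul_cancel₀ _ hMpos.ne'
  have h2 := h (-(t • g))
  rw [neg_dotProduct, smul_dotProduct, mulVec_neg, mulVec_smul, dotProduct_neg, neg_dotProduct,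
    dotProduct_smul, smul_dotProduct] at h2
  simp only [smul_eq_mul, neg_neg] at h2
  have key : t * (t * qq) ≤ t * s := by
    have h3 : t * qq ≤ t * Mx := mul_le_mul_of_nonneg_left hMq ht.le
    rw [htM] at h3
    exact mul_le_mul_of_nonneg_left h3 ht.le
  nlinarith [mul_pos ht hs]

lemma zero_mem_lm {k : ℕ} {T : Matrix (Fin k) (Fin k) ℝ} (hpsd : ∀ v, 0 ≤ v ⬝ᵥ T *ᵥ v) :
    (0:ℝ) ∈ {c : ℝ | ∀ v : Fin k → ℝ, c * (v ⬝ᵥ v) ≤ v ⬝ᵥ T.mulVec v} := by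
  intro v; simpa using hpsd v

lemma lambdaMin_quad {k : ℕ} {T : Matrix (Fin k) (Fin k) ℝ}
    (hpsd : ∀ v, 0 ≤ v ⬝ᵥ T *ᵥ v) (v : Fin k → ℝ) :
    lambdaMin T * (v ⬝ᵥ v) ≤ v ⬝ᵥ T *ᵥ v := by
  rcases eq_or_ne v 0 with rfl | hv
  · simpa using hpsd 0
  · have hvv : 0 < v ⬝ᵥ v :=
      lt_of_le_of_ne (dot_self_nonneg v) (fun hh => hv (dotProduct_self_eq_zero.mp hh.symm))
    have hub : lambdaMin T ≤ (v ⬝ᵥ T *ᵥ v) / (v ⬝ᵥ v) := by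
      apply csSup_le ⟨0, zero_mem_lm hpsd⟩
      intro c hc
      rw [le_div_iff₀ hvv]
      exact hc v
    calc lambdaMin T * (v ⬝ᵥ v) ≤ (v ⬝ᵥ T *ᵥ v) / (v ⬝ᵥ v) * (v ⬝ᵥ v) :=
          mul_le_mul_of_nonneg_right hub hvv.le
      _ = v ⬝ᵥ T *ᵥ v := div_mul_cancel₀ _ hvv.ne'

lemma lambdaMin_nonneg {k : ℕ} (hk : 0 < k) {T : Matrix (Fin k) (Fin k) ℝ}
    (hpsd : ∀ v, 0 ≤ v ⬝ᵥ T *ᵥ v) : 0 ≤ lambdaMin T := by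
  have he : (Pi.single (⟨0, hk⟩ : Fin k) (1:ℝ)) ⬝ᵥ (Pi.single (⟨0, hk⟩ : Fin k) (1:ℝ)) = 1 := by
    simp
  apply le_csSup _ (zero_mem_lm hpsd)
  refine ⟨(Pi.single (⟨0, hk⟩ : Fin k) (1:ℝ)) ⬝ᵥ T *ᵥ (Pi.single (⟨0, hk⟩ : Fin k) (1:ℝ)),
    fun c hc => ?_⟩
  have := hc (Pi.single (⟨0, hk⟩ : Fin k) (1:ℝ))
  rwa [he, mul_one] at this

lemma lambdaMin_le_one {k : ℕ} (hk : 0 < k) {T : Matrix (Fin k) (Fin k) ℝ}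
    (hpsd : ∀ v, 0 ≤ v ⬝ᵥ T *ᵥ v) (hle : ∀ v, v ⬝ᵥ T *ᵥ v ≤ v ⬝ᵥ v) :
    lambdaMin T ≤ 1 := by
  apply csSup_le ⟨0, zero_mem_lm hpsd⟩
  intro c hc
  have he : (Pi.single (⟨0, hk⟩ : Fin k) (1:ℝ)) ⬝ᵥ (Pi.single (⟨0, hk⟩ : Fin k) (1:ℝ)) = 1 := by
    simp
  have h1 := hc (Pi.single (⟨0, hk⟩ : Fin k) (1:ℝ))
  have h2 := hle (Pi.single (⟨0, hk⟩ : Fin k) (1:ℝ))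
  rw [he, mul_one] at h1
  rw [he] at h2
  linarith

lemma conj_quad {k : ℕ} {M S : Matrix (Fin k) (Fin k) ℝ} (hM : M.IsSymm) (v : Fin k → ℝ) :
    v ⬝ᵥ (M * S * M) *ᵥ v = (M *ᵥ v) ⬝ᵥ S *ᵥ (M *ᵥ v) := by
  have h1 : (M * S * M) *ᵥ v = M *ᵥ (S *ᵥ (M *ᵥ v)) := by
    rw [mulVec_mulVec, mulVec_mulVec, Matrix.mul_assoc]
  rw [h1, dot_symm hM, dotProduct_comm]

structure SqrtFacts {k : ℕ} {A : Matrix (Fin k) (Fin k) ℝ} (hA : A.PosDef) : Prop where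
  rsymm : (posSemidefSqrt hA.posSemidef).IsSymm
  risymm : (posSemidefSqrt hA.posSemidef)⁻¹.IsSymm
  rr : posSemidefSqrt hA.posSemidef * posSemidefSqrt hA.posSemidef = A
  rri : posSemidefSqrt hA.posSemidef * (posSemidefSqrt hA.posSemidef)⁻¹ = 1
  rir : (posSemidefSqrt hA.posSemidef)⁻¹ * posSemidefSqrt hA.posSemidef = 1
  ainv : A⁻¹ = (posSemidefSqrt hA.posSemidef)⁻¹ * (posSemidefSqrt hA.posSemidef)⁻¹

lemma sqrt_facts {k : ℕ} {A : Matrix (Fin k) (Fin k) ℝ} (hA : A.PosDef) : SqrtFacts hA := by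
  set R := posSemidefSqrt hA.posSemidef with hR
  have hRsymm : R.IsSymm := by
    show Rᵀ = R
    rw [← Matrix.conjTranspose_eq_transpose_of_trivial]
    simp [hR, posSemidefSqrt, Matrix.star_eq_conjTranspose, Matrix.mul_assoc]
  have hRR : R * R = A := by
    set U := hA.posSemidef.1.eigenvectorUnitary with hUdef
    have hU : (star U : Matrix (Fin k) (Fin k) ℝ) * U = 1 := Unitary.coe_star_mul_self U
    conv_rhs => rw [hA.posSemidef.1.spectral_theorem, Unitary.conjStarAlgAut_apply]
    rw [hR, posSemidefSqrt]
    simp only [Matrix.mul_assoc]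
    rw [← Matrix.mul_assoc (star U : Matrix (Fin k) (Fin k) ℝ) (U : Matrix (Fin k) (Fin k) ℝ), hU,
      Matrix.one_mul, ← Matrix.mul_assoc (diagonal _), diagonal_mul_diagonal]
    congr 3; funext i
    simp [Real.mul_self_sqrt (hA.posSemidef.eigenvalues_nonneg i)]
  have hdet : IsUnit R.det := by
    have h1 : R.det * R.det = A.det := by rw [← Matrix.det_mul, hRR]
    have h2 : A.det ≠ 0 := hA.det_pos.ne'
    exact isUnit_iff_ne_zero.mpr (fun h => h2 (by rw [← h1, h, mul_zero]))
  have hrri : R * R⁻¹ = 1 := Matrix.mul_nonsing_inv _ hdet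
  have hrir : R⁻¹ * R = 1 := Matrix.nonsing_inv_mul _ hdet
  have hri : (R⁻¹).IsSymm := by
    show (R⁻¹)ᵀ = R⁻¹
    rw [Matrix.transpose_nonsing_inv, hRsymm]
  have hainv : A⁻¹ = R⁻¹ * R⁻¹ := by
    have h : A * (R⁻¹ * R⁻¹) = 1 := by
      conv_lhs => rw [← hRR]
      rw [Matrix.mul_assoc, ← Matrix.mul_assoc R R⁻¹, hrri, Matrix.one_mul, hrri]
    exact Matrix.inv_eq_right_inv h
  exact ⟨hRsymm, hri, hRR, hrri, hrir, hainv⟩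

/-- The conjugated Schur complement `R⁻¹ S R⁻¹` dominates: `λ_min ≤ 1` when `S ⪯ A`. -/
lemma lambdaMin_conj_le_one {k : ℕ} (hk : 0 < k) {A : Matrix (Fin k) (Fin k) ℝ}
    (hA : A.PosDef) {S : Matrix (Fin k) (Fin k) ℝ}
    (hSpsd : ∀ u, 0 ≤ u ⬝ᵥ S *ᵥ u) (hle : ∀ u, u ⬝ᵥ S *ᵥ u ≤ u ⬝ᵥ A *ᵥ u) :
    lambdaMin ((posSemidefSqrt hA.posSemidef)⁻¹ * S * (posSemidefSqrt hA.posSemidef)⁻¹) ≤ 1 := by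
  obtain ⟨hRs, hRis, hRR, hrri, hrir, hainv⟩ := sqrt_facts hA
  set R := posSemidefSqrt hA.posSemidef with hRdef
  have hTpsd : ∀ v, 0 ≤ v ⬝ᵥ (R⁻¹ * S * R⁻¹) *ᵥ v := fun v => by
    rw [conj_quad hRis]; exact hSpsd _
  apply lambdaMin_le_one hk hTpsd
  intro v
  rw [conj_quad hRis]
  calc (R⁻¹ *ᵥ v) ⬝ᵥ S *ᵥ (R⁻¹ *ᵥ v) ≤ (R⁻¹ *ᵥ v) ⬝ᵥ A *ᵥ (R⁻¹ *ᵥ v) := hle _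
    _ = v ⬝ᵥ (R⁻¹ * A * R⁻¹) *ᵥ v := (conj_quad hRis v).symm
    _ = v ⬝ᵥ v := by
        have : R⁻¹ * A * R⁻¹ = 1 := by
          conv_lhs => rw [← hRR]
          rw [Matrix.mul_assoc, Matrix.mul_assoc, hrri, Matrix.mul_one, hrir]
        rw [this, one_mulVec]

lemma halfstep {n m : ℕ} (hn : 0 < n)
    (A : Matrix (Fin n) (Fin n) ℝ) (C : Matrix (Fin m) (Fin m) ℝ)
    (B : Matrix (Fin m) (Fin n) ℝ)
    (hAsymm : A.IsSymm) (hCsymm : C.IsSymm) (hA : A.PosDef) (hC : C.PosDef)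
    (hS : (A - Bᵀ * C⁻¹ * B).PosSemidef)
    (e : (Fin n → ℝ) → (Fin m → ℝ) → ℝ)
    (he : ∀ w u, e w u = 1 / 2 * (w ⬝ᵥ A *ᵥ w + 2 * (u ⬝ᵥ B *ᵥ w) + u ⬝ᵥ C *ᵥ u))
    (w : Fin n → ℝ) (u : Fin m → ℝ) (hu : C *ᵥ u + B *ᵥ w = 0)
    (w' : Fin n → ℝ) (hw' : ∀ y, e w' u ≤ e y u) :
    e w' u ≤ (1 - lambdaMin ((posSemidefSqrt hA.posSemidef)⁻¹ * (A - Bᵀ * C⁻¹ * B) *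
      (posSemidefSqrt hA.posSemidef)⁻¹)) * e w u := by
  obtain ⟨hRs, hRis, hRR, hrri, hrir, hainv⟩ := sqrt_facts hA
  set R := posSemidefSqrt hA.posSemidef with hRdef
  set S := A - Bᵀ * C⁻¹ * B with hSdef
  set g : Fin n → ℝ := S *ᵥ w with hgdef
  set lam := lambdaMin (R⁻¹ * S * R⁻¹) with hlamdef
  have hdetA : IsUnit A.det := isUnit_iff_ne_zero.mpr hA.det_pos.ne'
  have hdetC : IsUnit C.det := isUnit_iff_ne_zero.mpr hC.det_pos.ne'
  have hCu : C *ᵥ u = -(B *ᵥ w) := by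
    rw [← add_eq_zero_iff_eq_neg] at *
    exact hu
  have hf1 : u = -(C⁻¹ *ᵥ (B *ᵥ w)) := by
    have h0 : C⁻¹ *ᵥ (C *ᵥ u) = u := by
      rw [mulVec_mulVec, Matrix.nonsing_inv_mul _ hdetC, one_mulVec]
    rw [← h0, hCu, mulVec_neg]
  have hBtu : Bᵀ *ᵥ u = g - A *ᵥ w := by
    have h1 : Bᵀ *ᵥ u = -((Bᵀ * C⁻¹ * B) *ᵥ w) := by
      rw [hf1, mulVec_neg, mulVec_mulVec, mulVec_mulVec, Matrix.mul_assoc]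
    have h2 : g - A *ᵥ w = -((Bᵀ * C⁻¹ * B) *ᵥ w) := by
      rw [hgdef, hSdef, sub_mulVec]
      abel
    rw [h1, h2]
  -- scalar abbreviations
  set al : ℝ := w ⬝ᵥ A *ᵥ w with hal
  set s : ℝ := w ⬝ᵥ g with hsdot
  set de : ℝ := g ⬝ᵥ A⁻¹ *ᵥ g with hde
  have hubw : u ⬝ᵥ B *ᵥ w = s - al := by
    rw [← dot_trans B w u, hBtu, dotProduct_sub, hal, hsdot]
  have hucu : u ⬝ᵥ C *ᵥ u = al - s := by
    rw [hCu, dotProduct_neg, hubw]; ring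
  have hf2 : e w u = 1 / 2 * s := by
    rw [he, hubw, hucu]; ring
  -- value at the exact minimizer over the first block
  have hAz : A *ᵥ (A⁻¹ *ᵥ g) = g := by
    rw [mulVec_mulVec, Matrix.mul_nonsing_inv _ hdetA, one_mulVec]
  have hwAz : w ⬝ᵥ A *ᵥ (A⁻¹ *ᵥ g) = s := by rw [hAz, hsdot]
  have hzAw : (A⁻¹ *ᵥ g) ⬝ᵥ A *ᵥ w = s := by rw [← dot_symm hAsymm, hwAz]
  have hzg : (A⁻¹ *ᵥ g) ⬝ᵥ g = de := by rw [dotProduct_comm, hde]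
  have hf3 : e (w - A⁻¹ *ᵥ g) u = 1 / 2 * s - 1 / 2 * de := by
    rw [he]
    have e1 : (w - A⁻¹ *ᵥ g) ⬝ᵥ A *ᵥ (w - A⁻¹ *ᵥ g) = al - 2 * s + de := by
      rw [mulVec_sub, dotProduct_sub, sub_dotProduct, sub_dotProduct, hwAz, hzAw]
      have : (A⁻¹ *ᵥ g) ⬝ᵥ A *ᵥ (A⁻¹ *ᵥ g) = de := by rw [hAz, hzg]
      rw [this, hal]
      ring
    have e2 : u ⬝ᵥ B *ᵥ (w - A⁻¹ *ᵥ g) = 2 * s - al - de := by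
      rw [← dot_trans B _ u, hBtu, dotProduct_sub, sub_dotProduct, sub_dotProduct,
        hzg, hzAw, hsdot, hal]
      ring
    rw [e1, e2, hucu]
    ring
  have hw'le : e w' u ≤ 1 / 2 * s - 1 / 2 * de := hf3 ▸ hw' (w - A⁻¹ *ᵥ g)
  -- the eigenvalue inequality lam * s ≤ de
  have hTpsd : ∀ z, 0 ≤ z ⬝ᵥ (R⁻¹ * S * R⁻¹) *ᵥ z := fun z => by
    rw [conj_quad hRis]; exact psd_quad hS _
  set v : Fin n → ℝ := R *ᵥ w with hv
  have hTv : (R⁻¹ * S * R⁻¹) *ᵥ v = R⁻¹ *ᵥ g := by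
    rw [hv, mulVec_mulVec]
    have : R⁻¹ * S * R⁻¹ * R = R⁻¹ * S := by
      rw [Matrix.mul_assoc, hrir, Matrix.mul_one]
    rw [this, ← mulVec_mulVec, hgdef]
  have hb : v ⬝ᵥ (R⁻¹ * S * R⁻¹) *ᵥ v = s := by
    rw [hTv, hv, dot_symm hRis, mulVec_mulVec, hrir, one_mulVec, dotProduct_comm, hsdot]
  have hc : ((R⁻¹ * S * R⁻¹) *ᵥ v) ⬝ᵥ ((R⁻¹ * S * R⁻¹) *ᵥ v) = de := by
    rw [hTv, hde, hainv, ← mulVec_mulVec, dot_symm hRis]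
  have hCS : (v ⬝ᵥ ((R⁻¹ * S * R⁻¹) *ᵥ v)) ^ 2 ≤
      (v ⬝ᵥ v) * (((R⁻¹ * S * R⁻¹) *ᵥ v) ⬝ᵥ ((R⁻¹ * S * R⁻¹) *ᵥ v)) := by
    have := Finset.sum_mul_sq_le_sq_mul_sq Finset.univ v ((R⁻¹ * S * R⁻¹) *ᵥ v)
    simpa [dotProduct, sq] using this
  have hlam0 : 0 ≤ lam := lambdaMin_nonneg hn hTpsd
  have hlamq := lambdaMin_quad hTpsd v
  rw [hb] at hlamq
  have hsnn : 0 ≤ s := by rw [← hb]; exact hTpsd v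
  have hdenn : 0 ≤ de := by rw [← hc]; exact dot_self_nonneg _
  have hann : 0 ≤ v ⬝ᵥ v := dot_self_nonneg v
  rw [hb, hc] at hCS
  have hkey : lam * s ≤ de := by
    rcases eq_or_lt_of_le hsnn with hs0 | hs0
    · rw [← hs0, mul_zero]; exact hdenn
    · nlinarith [mul_le_mul_of_nonneg_left hCS hlam0,
        mul_le_mul_of_nonneg_right hlamq hdenn]
  rw [hf2]
  linarith

/-- sharp q-linear convergence of alternating minimization for the
strongly convex quadratic model problem: for every `k ≥ 0`,
`H^{k+1} - H* ≤ (1 - λ_min(A^{-1/2} S_A A^{-1/2})) (1 - λ_min(C^{-1/2} S_C C^{-1/2}))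
  (H^k - H*)`,
where `S_A = A - BᵀC⁻¹B`, `S_C = C - BA⁻¹Bᵀ` are the Schur complements and `A^{-1/2}`
denotes the inverse of the positive-semidefinite square root of `A`. -/
theorem stmt16 {n m : ℕ} (hn : 1 ≤ n) (hm : 1 ≤ m)
    (A : Matrix (Fin n) (Fin n) ℝ) (C : Matrix (Fin m) (Fin m) ℝ)
    (B : Matrix (Fin m) (Fin n) ℝ) (b₁ : Fin n → ℝ) (b₂ : Fin m → ℝ)
    (hAsymm : A.IsSymm) (hCsymm : C.IsSymm)
    (hM : (Matrix.fromBlocks A Bᵀ B C).PosDef)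
    (hA : A.PosDef) (hC : C.PosDef)
    -- the quadratic objective function
    (H : ((Fin n → ℝ) × (Fin m → ℝ)) → ℝ)
    (hH : ∀ (x₁ : Fin n → ℝ) (x₂ : Fin m → ℝ), H (x₁, x₂) =
      1 / 2 * (x₁ ⬝ᵥ A.mulVec x₁ + 2 * (x₂ ⬝ᵥ B.mulVec x₁) + x₂ ⬝ᵥ C.mulVec x₂)
        - b₁ ⬝ᵥ x₁ - b₂ ⬝ᵥ x₂)
    -- the minimal value H* (attained since M is positive definite)
    (Hstar : ℝ) (hHstarle : ∀ z, Hstar ≤ H z) (hHstarex : ∃ z, H z = Hstar)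
    -- the alternating minimization sequence
    (x : ℕ → (Fin n → ℝ) × (Fin m → ℝ))
    (hinit : ∀ y₂, H (x 0) ≤ H ((x 0).1, y₂))
    (hstep1 : ∀ (k : ℕ) y₁, H ((x (k + 1)).1, (x k).2) ≤ H (y₁, (x k).2))
    (hstep2 : ∀ (k : ℕ) y₂, H (x (k + 1)) ≤ H ((x (k + 1)).1, y₂)) :
    ∀ k : ℕ,
      H (x (k + 1)) - Hstar ≤
        (1 - lambdaMin ((posSemidefSqrt hA.posSemidef)⁻¹ * (A - Bᵀ * C⁻¹ * B) *
            (posSemidefSqrt hA.posSemidef)⁻¹)) *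
        (1 - lambdaMin ((posSemidefSqrt hC.posSemidef)⁻¹ * (C - B * A⁻¹ * Bᵀ) *
            (posSemidefSqrt hC.posSemidef)⁻¹)) *
        (H (x k) - Hstar) := by
  haveI : Invertible A := A.invertibleOfIsUnitDet (isUnit_iff_ne_zero.mpr hA.det_pos.ne')
  haveI : Invertible C := C.invertibleOfIsUnitDet (isUnit_iff_ne_zero.mpr hC.det_pos.ne')
  have hbb : (Bᵀ)ᴴ = B := by
    rw [conjTranspose_eq_transpose_of_trivial, transpose_transpose]
  have hblk : (fromBlocks A Bᵀ (Bᵀ)ᴴ C).PosSemidef := by rw [hbb]; exact hM.posSemidef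
  have hSA : (A - Bᵀ * C⁻¹ * B).PosSemidef := by
    have h := (Matrix.PosDef.fromBlocks₂₂ A Bᵀ hC).mp hblk
    rwa [hbb] at h
  have hSC : (C - B * A⁻¹ * Bᵀ).PosSemidef := by
    have h := (Matrix.PosDef.fromBlocks₁₁ Bᵀ C hA).mp hblk
    rwa [hbb] at h
  -- the minimizer and its stationarity
  obtain ⟨⟨p, q⟩, hz⟩ := hHstarex
  have expand : ∀ (p₁ : Fin n → ℝ) (q₁ : Fin m → ℝ) (w : Fin n → ℝ) (u : Fin m → ℝ),
      H (p₁ + w, q₁ + u) = H (p₁, q₁) + (w ⬝ᵥ (A *ᵥ p₁ + Bᵀ *ᵥ q₁ - b₁)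
        + u ⬝ᵥ (B *ᵥ p₁ + C *ᵥ q₁ - b₂))
        + 1 / 2 * (w ⬝ᵥ A *ᵥ w + 2 * (u ⬝ᵥ B *ᵥ w) + u ⬝ᵥ C *ᵥ u) := by
    intro p₁ q₁ w u
    rw [hH, hH]
    simp only [mulVec_add, dotProduct_add, add_dotProduct, dotProduct_sub]
    have s1 := dot_symm hAsymm p₁ w
    have s2 := dot_symm hCsymm q₁ u
    have s3 := dot_trans B w q₁
    have s4 := dotProduct_comm w b₁
    have s5 := dotProduct_comm u b₂
    linarith
  have hg1 : A *ᵥ p + Bᵀ *ᵥ q - b₁ = 0 := by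
    apply grad_zero A
    intro v
    have h0 := hHstarle (p + v, q)
    have h1 := expand p q v 0
    simp only [add_zero, zero_dotProduct, dotProduct_zero, mulVec_zero] at h1
    rw [hz] at h1
    rw [h1] at h0
    linarith
  have hg2 : B *ᵥ p + C *ᵥ q - b₂ = 0 := by
    apply grad_zero C
    intro v
    have h0 := hHstarle (p, q + v)
    have h1 := expand p q 0 v
    simp only [add_zero, zero_dotProduct, dotProduct_zero, mulVec_zero] at h1
    rw [hz] at h1
    rw [h1] at h0
    linarith
  have hkey : ∀ (w : Fin n → ℝ) (u : Fin m → ℝ),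
      H (p + w, q + u) - Hstar =
        1 / 2 * (w ⬝ᵥ A *ᵥ w + 2 * (u ⬝ᵥ B *ᵥ w) + u ⬝ᵥ C *ᵥ u) := by
    intro w u
    rw [expand, hg1, hg2, hz]
    simp
  intro k
  -- gradient conditions along the iteration
  have P2 : ∀ y₂, H ((x k).1, (x k).2) ≤ H ((x k).1, y₂) := by
    cases k with
    | zero => intro y₂; simpa using hinit y₂
    | succ j => intro y₂; simpa using hstep2 j y₂
  have hga : B *ᵥ (x k).1 + C *ᵥ (x k).2 - b₂ = 0 := by
    apply grad_zero C
    intro v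
    have h0 := P2 ((x k).2 + v)
    have h1 := expand (x k).1 (x k).2 0 v
    simp only [add_zero, zero_dotProduct, dotProduct_zero, mulVec_zero] at h1
    rw [h1] at h0
    linarith
  have hgc : A *ᵥ (x (k+1)).1 + Bᵀ *ᵥ (x k).2 - b₁ = 0 := by
    apply grad_zero A
    intro v
    have h0 := hstep1 k ((x (k+1)).1 + v)
    have h1 := expand (x (k+1)).1 (x k).2 v 0
    simp only [add_zero, zero_dotProduct, dotProduct_zero, mulVec_zero] at h1
    rw [h1] at h0
    linarith
  -- abbreviations
  set a₁ := (x k).1 with ha₁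
  set a₂ := (x k).2 with ha₂
  set c₁ := (x (k+1)).1 with hc₁
  set c₂ := (x (k+1)).2 with hc₂
  have hca : p + (c₁ - p) = c₁ := by abel
  have hcb : q + (c₂ - q) = c₂ := by abel
  have haa : p + (a₁ - p) = a₁ := by abel
  have hab : q + (a₂ - q) = a₂ := by abel
  -- first half-step
  have h1 : H (c₁, a₂) - Hstar ≤
      (1 - lambdaMin ((posSemidefSqrt hA.posSemidef)⁻¹ * (A - Bᵀ * C⁻¹ * B) *
        (posSemidefSqrt hA.posSemidef)⁻¹)) * (H (a₁, a₂) - Hstar) := by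
    have hu : C *ᵥ (a₂ - q) + B *ᵥ (a₁ - p) = 0 := by
      have hrw : C *ᵥ (a₂ - q) + B *ᵥ (a₁ - p)
          = (B *ᵥ a₁ + C *ᵥ a₂ - b₂) - (B *ᵥ p + C *ᵥ q - b₂) := by
        rw [mulVec_sub, mulVec_sub]; abel
      rw [hrw, hga, hg2, sub_zero]
    have hw' : ∀ y, (fun w u => H (p + w, q + u) - Hstar) (c₁ - p) (a₂ - q)
        ≤ (fun w u => H (p + w, q + u) - Hstar) y (a₂ - q) := by
      intro y
      simp only
      rw [hca, hab]
      exact sub_le_sub_right (hstep1 k (p + y)) _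
    have hres := halfstep hn A C B hAsymm hCsymm hA hC hSA
      (fun w u => H (p + w, q + u) - Hstar)
      (fun w u => hkey w u) (a₁ - p) (a₂ - q) hu (c₁ - p) hw'
    rwa [hca, haa, hab] at hres
  -- second half-step
  have h2 : H (c₁, c₂) - Hstar ≤
      (1 - lambdaMin ((posSemidefSqrt hC.posSemidef)⁻¹ * (C - B * A⁻¹ * Bᵀ) *
        (posSemidefSqrt hC.posSemidef)⁻¹)) * (H (c₁, a₂) - Hstar) := by
    have hSC' : (C - Bᵀᵀ * A⁻¹ * Bᵀ).PosSemidef := by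
      rw [transpose_transpose]; exact hSC
    have he' : ∀ (u : Fin m → ℝ) (w : Fin n → ℝ),
        (fun (uu : Fin m → ℝ) (ww : Fin n → ℝ) => H (p + ww, q + uu) - Hstar) u w
          = 1 / 2 * (u ⬝ᵥ C *ᵥ u + 2 * (w ⬝ᵥ Bᵀ *ᵥ u) + w ⬝ᵥ A *ᵥ w) := by
      intro u w
      simp only
      rw [hkey, dot_trans B w u]
      ring
    have hu' : A *ᵥ (c₁ - p) + Bᵀ *ᵥ (a₂ - q) = 0 := by
      have hrw : A *ᵥ (c₁ - p) + Bᵀ *ᵥ (a₂ - q)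
          = (A *ᵥ c₁ + Bᵀ *ᵥ a₂ - b₁) - (A *ᵥ p + Bᵀ *ᵥ q - b₁) := by
        rw [mulVec_sub, mulVec_sub]; abel
      rw [hrw, hgc, hg1, sub_zero]
    have hw₂ : ∀ y, (fun (uu : Fin m → ℝ) (ww : Fin n → ℝ) => H (p + ww, q + uu) - Hstar) (c₂ - q) (c₁ - p)
        ≤ (fun (uu : Fin m → ℝ) (ww : Fin n → ℝ) => H (p + ww, q + uu) - Hstar) y (c₁ - p) := by
      intro y
      simp only
      rw [hca, hcb]
      exact sub_le_sub_right (hstep2 k (q + y)) _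
    have hres := halfstep hm C A Bᵀ hCsymm hAsymm hC hA hSC'
      (fun (uu : Fin m → ℝ) (ww : Fin n → ℝ) => H (p + ww, q + uu) - Hstar)
      he' (a₂ - q) (c₁ - p) hu' (c₂ - q) hw₂
    rw [hca, hcb, hab, transpose_transpose] at hres
    exact hres
  -- the contraction factor for the second step is nonnegative
  have hl2 : lambdaMin ((posSemidefSqrt hC.posSemidef)⁻¹ * (C - B * A⁻¹ * Bᵀ) *
      (posSemidefSqrt hC.posSemidef)⁻¹) ≤ 1 := by
    apply lambdaMin_conj_le_one hm hC (psd_quad hSC)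
    intro u
    have hexp : u ⬝ᵥ (C - B * A⁻¹ * Bᵀ) *ᵥ u
        = u ⬝ᵥ C *ᵥ u - u ⬝ᵥ (B * A⁻¹ * Bᵀ) *ᵥ u := by
      rw [sub_mulVec, dotProduct_sub]
    have hpos : 0 ≤ u ⬝ᵥ (B * A⁻¹ * Bᵀ) *ᵥ u := by
      have hm1 : (B * A⁻¹ * Bᵀ) *ᵥ u = B *ᵥ (A⁻¹ *ᵥ (Bᵀ *ᵥ u)) := by
        rw [mulVec_mulVec, mulVec_mulVec, Matrix.mul_assoc]
      rw [hm1, ← dot_trans B (A⁻¹ *ᵥ (Bᵀ *ᵥ u)) u, dotProduct_comm]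
      exact psd_quad hA.inv.posSemidef _
    rw [hexp]
    linarith
  have hr2 : 0 ≤ 1 - lambdaMin ((posSemidefSqrt hC.posSemidef)⁻¹ * (C - B * A⁻¹ * Bᵀ) *
      (posSemidefSqrt hC.posSemidef)⁻¹) := by linarith
  have hx1 : x (k + 1) = (c₁, c₂) := Prod.mk.eta.symm
  have hx0 : x k = (a₁, a₂) := Prod.mk.eta.symm
  rw [hx1, hx0]
  calc H (c₁, c₂) - Hstar
      ≤ (1 - lambdaMin ((posSemidefSqrt hC.posSemidef)⁻¹ * (C - B * A⁻¹ * Bᵀ) *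
          (posSemidefSqrt hC.posSemidef)⁻¹)) * (H (c₁, a₂) - Hstar) := h2
    _ ≤ (1 - lambdaMin ((posSemidefSqrt hC.posSemidef)⁻¹ * (C - B * A⁻¹ * Bᵀ) *
          (posSemidefSqrt hC.posSemidef)⁻¹)) *
        ((1 - lambdaMin ((posSemidefSqrt hA.posSemidef)⁻¹ * (A - Bᵀ * C⁻¹ * B) *
          (posSemidefSqrt hA.posSemidef)⁻¹)) * (H (a₁, a₂) - Hstar)) :=
        mul_le_mul_of_nonneg_left h1 hr2
    _ = (1 - lambdaMin ((posSemidefSqrt hA.posSemidef)⁻¹ * (A - Bᵀ * C⁻¹ * B) *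
          (posSemidefSqrt hA.posSemidef)⁻¹)) *
        (1 - lambdaMin ((posSemidefSqrt hC.posSemidef)⁻¹ * (C - B * A⁻¹ * Bᵀ) *
          (posSemidefSqrt hC.posSemidef)⁻¹)) * (H (a₁, a₂) - Hstar) := by ring
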